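/- With notation as in the context, for every $n \geq 2$: (i) for each $1 \leq i \leq n-1$, the function $J_n$, regarded as a rational function in the single variable $z_i$ over the field generated by the remaining variables, has no pole at $z_i = 0$ and its value at $z_i = 0$ equals $0$; (ii) for each $2 \leq i \leq n$, the rational function in $w$ obtained from $J_n$ by substituting $z_i = w^{-1}$ has no pole at $w = 0$ and its value at $w = 0$ equals $0$. (This is the claim in the proof of Lemma 3.3 that all residues of $J_n$ at $0$ and $\infty$ vanish, except those at $z_n = 0$ and $z_1 = \infty$.) -/

import Mathlib

open scoped BigOperators

noncomputable section

/-- `ζ(w) = (1 - w q₁)(1 - w q₂) / ((1 - w)(1 - w q₁ q₂))`. -/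
def zetaF {L : Type*} [Field L] (q₁ q₂ w : L) : L :=
  ((1 - w * q₁) * (1 - w * q₂)) / ((1 - w) * (1 - w * (q₁ * q₂)))

/-- The rational expression `J_n` of equation (3.34) of the paper, evaluated at
`z_1 = z 0, …, z_n = z (n-1)`, where `ι : F →+* L` embeds the field of constants. -/
def Jfun {F L : Type*} [Field F] [Field L] (ι : F →+* L) (q₁ q₂ m : F)
    (r : ℕ) (x x' : Fin r → F) (n : ℕ) (z : ℕ → L) : L :=
  (ι q₁ * ι q₂) ^ (r * n) *
    ((∏ i ∈ Finset.range (n - 1), (1 - ι q₁ * ι q₂ * z (i + 1) / z i)) *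
      ∏ i ∈ Finset.range n, ∏ j ∈ Finset.Ico (i + 1) n, zetaF (ι q₁) (ι q₂) (z j / z i))⁻¹ *
    ∏ i ∈ Finset.range n,
      (∏ a : Fin r, (1 - ι (x' a) / (z i * (ι q₁ * ι q₂)))) /
        ∏ a : Fin r, (1 - ι m * ι (x a) / (z i * (ι q₁ * ι q₂)))

section RZ

variable {K : Type*} [Field K]

/-- `f` is regular at `0` with value `v` (as a rational function in `RatFunc K`). -/
def RZ (f : RatFunc K) (v : K) : Prop :=
  ∃ p q : Polynomial K, Polynomial.eval 0 q ≠ 0 ∧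
    algebraMap (Polynomial K) (RatFunc K) q * f = algebraMap (Polynomial K) (RatFunc K) p ∧
    Polynomial.eval 0 p = v * Polynomial.eval 0 q

/-- regular at `0` -/
def Reg (f : RatFunc K) : Prop := ∃ v, RZ f v

/-- regular at `0` with nonzero value -/
def Regs (f : RatFunc K) : Prop := ∃ v, v ≠ 0 ∧ RZ f v

lemma RZ.congr {f f' : RatFunc K} {v v' : K} (h : RZ f v) (hf : f = f') (hv : v = v') :
    RZ f' v' := hf ▸ hv ▸ h

lemma RZ_C (c : K) : RZ (RatFunc.C c) c :=
  ⟨Polynomial.C c, 1, by simp, by simp [RatFunc.algebraMap_C], by simp⟩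

lemma RZ_one : RZ (1 : RatFunc K) 1 := by simpa using RZ_C (1 : K)

lemma RZ_X : RZ (RatFunc.X : RatFunc K) 0 :=
  ⟨Polynomial.X, 1, by simp, by simp [RatFunc.algebraMap_X], by simp⟩

lemma RZ.mul {f g : RatFunc K} {v w : K} (hf : RZ f v) (hg : RZ g w) : RZ (f * g) (v * w) := by
  obtain ⟨p1, q1, h1, e1, v1⟩ := hf
  obtain ⟨p2, q2, h2, e2, v2⟩ := hg
  refine ⟨p1 * p2, q1 * q2, by simp [h1, h2], ?_, by simp [v1, v2]; ring⟩
  rw [map_mul, map_mul]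
  calc algebraMap (Polynomial K) (RatFunc K) q1 * algebraMap (Polynomial K) (RatFunc K) q2 * (f * g)
      = (algebraMap (Polynomial K) (RatFunc K) q1 * f) *
        (algebraMap (Polynomial K) (RatFunc K) q2 * g) := by ring
    _ = _ := by rw [e1, e2]

lemma RZ.add {f g : RatFunc K} {v w : K} (hf : RZ f v) (hg : RZ g w) : RZ (f + g) (v + w) := by
  obtain ⟨p1, q1, h1, e1, v1⟩ := hf
  obtain ⟨p2, q2, h2, e2, v2⟩ := hg
  refine ⟨p1 * q2 + p2 * q1, q1 * q2, by simp [h1, h2], ?_, by simp [v1, v2]; ring⟩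
  rw [map_add, map_mul, map_mul, map_mul]
  calc algebraMap (Polynomial K) (RatFunc K) q1 * algebraMap (Polynomial K) (RatFunc K) q2 * (f + g)
      = (algebraMap (Polynomial K) (RatFunc K) q1 * f) * algebraMap (Polynomial K) (RatFunc K) q2 +
        (algebraMap (Polynomial K) (RatFunc K) q2 * g) * algebraMap (Polynomial K) (RatFunc K) q1 := by
        ring
    _ = _ := by rw [e1, e2]

lemma RZ.neg {f : RatFunc K} {v : K} (hf : RZ f v) : RZ (-f) (-v) := by
  obtain ⟨p, q, h, e, hv⟩ := hf
  exact ⟨-p, q, h, by rw [map_neg, ← e]; ring, by simp [hv]⟩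

lemma RZ.sub {f g : RatFunc K} {v w : K} (hf : RZ f v) (hg : RZ g w) : RZ (f - g) (v - w) := by
  simpa [sub_eq_add_neg] using hf.add hg.neg

lemma RZ.inv {f : RatFunc K} {v : K} (hf : RZ f v) (hv : v ≠ 0) : RZ f⁻¹ v⁻¹ := by
  obtain ⟨p, q, h, e, hvv⟩ := hf
  have hp0 : Polynomial.eval 0 p ≠ 0 := by rw [hvv]; exact mul_ne_zero hv h
  have hp : p ≠ 0 := fun hh => by simp [hh] at hp0
  have hfne : f ≠ 0 := by
    intro hh
    rw [hh, mul_zero] at e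
    exact hp ((map_eq_zero_iff _ (RatFunc.algebraMap_injective K)).mp e.symm)
  refine ⟨q, p, hp0, ?_, ?_⟩
  · rw [← e, mul_assoc, mul_inv_cancel₀ hfne, mul_one]
  · rw [hvv]; field_simp
lemma RZ.div {f g : RatFunc K} {v w : K} (hf : RZ f v) (hg : RZ g w) (hw : w ≠ 0) :
    RZ (f / g) (v / w) := by
  rw [div_eq_mul_inv, div_eq_mul_inv]
  exact hf.mul (hg.inv hw)

lemma Reg.mul {f g : RatFunc K} (hf : Reg f) (hg : Reg g) : Reg (f * g) := by
  obtain ⟨v, hf⟩ := hf; obtain ⟨w, hg⟩ := hg; exact ⟨_, hf.mul hg⟩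

lemma Regs.mul {f g : RatFunc K} (hf : Regs f) (hg : Regs g) : Regs (f * g) := by
  obtain ⟨v, hv, hf⟩ := hf; obtain ⟨w, hw, hg⟩ := hg
  exact ⟨v * w, mul_ne_zero hv hw, hf.mul hg⟩

lemma Regs.inv {f : RatFunc K} (hf : Regs f) : Regs f⁻¹ := by
  obtain ⟨v, hv, hf⟩ := hf; exact ⟨v⁻¹, inv_ne_zero hv, hf.inv hv⟩

lemma Regs.reg {f : RatFunc K} (hf : Regs f) : Reg f := by
  obtain ⟨v, -, hf⟩ := hf; exact ⟨v, hf⟩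

lemma Regs_one : Regs (1 : RatFunc K) := ⟨1, one_ne_zero, RZ_one⟩

lemma Regs_prod {α : Type*} (s : Finset α) (f : α → RatFunc K)
    (h : ∀ a ∈ s, Regs (f a)) : Regs (∏ a ∈ s, f a) :=
  Finset.prod_induction f Regs (fun _ _ => Regs.mul) Regs_one h

lemma Reg_prod {α : Type*} (s : Finset α) (f : α → RatFunc K)
    (h : ∀ a ∈ s, Reg (f a)) : Reg (∏ a ∈ s, f a) :=
  Finset.prod_induction f Reg (fun _ _ => Reg.mul) ⟨1, RZ_one⟩ h

/-- The conclusion lemma: if `f = X * g` with `g` regular at `0`, then `f` has no pole at `0`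
and vanishes there. -/
lemma conclude {f g : RatFunc K} (hg : Reg g) (hf : f = RatFunc.X * g) :
    Polynomial.eval 0 (RatFunc.denom f) ≠ 0 ∧
      Polynomial.eval 0 (RatFunc.num f) / Polynomial.eval 0 (RatFunc.denom f) = 0 := by
  obtain ⟨v, p, q, hq, e, -⟩ := hg
  set am := algebraMap (Polynomial K) (RatFunc K)
  have key : am q * f = am (Polynomial.X * p) := by
    rw [hf, map_mul, RatFunc.algebraMap_X]
    calc am q * (RatFunc.X * g) = RatFunc.X * (am q * g) := by ring
      _ = _ := by rw [e]
  -- cross-multiply with num/denom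
  have hd := RatFunc.num_div_denom f
  have hdne : am (f.denom) ≠ 0 := by
    exact (map_ne_zero_iff _ (RatFunc.algebraMap_injective K)).mpr (RatFunc.denom_ne_zero f)
  have key2 : am (f.num * q) = am (f.denom * (Polynomial.X * p)) := by
    rw [map_mul, map_mul, ← key]
    rw [div_eq_iff hdne] at hd
    rw [hd]; ring
  have key3 : f.num * q = f.denom * (Polynomial.X * p) :=
    RatFunc.algebraMap_injective K key2
  have hnum0 : Polynomial.eval 0 f.num = 0 := by
    have := congrArg (Polynomial.eval 0) key3
    simp only [Polynomial.eval_mul, Polynomial.eval_X, zero_mul, mul_zero] at this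
    exact (mul_eq_zero.mp this).resolve_right hq
  constructor
  · -- denom ∣ q
    have hdvd : f.denom ∣ q := by
      have : f.denom ∣ f.num * q := ⟨Polynomial.X * p, key3⟩
      exact (RatFunc.isCoprime_num_denom f).symm.dvd_of_dvd_mul_left this
    obtain ⟨d, hdq⟩ := hdvd
    intro hh
    rw [hdq] at hq
    simp [hh] at hq
  · simp [hnum0]

end RZ

section Zeta

variable {K : Type*} [Field K]

lemma zeta_flip {L : Type*} [Field L] (a b w : L) (hw : w ≠ 0) :
    zetaF a b w = ((w⁻¹ - a) * (w⁻¹ - b)) / ((w⁻¹ - 1) * (w⁻¹ - a * b)) := by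
  have h : ∀ c : L, w⁻¹ - c = w⁻¹ * (1 - w * c) := by
    intro c
    rw [mul_sub, mul_one, ← mul_assoc, inv_mul_cancel₀ hw, one_mul]
  rw [zetaF, h a, h b, h 1, h (a * b)]
  rw [show w⁻¹ * (1 - w * a) * (w⁻¹ * (1 - w * b)) = (w⁻¹ * w⁻¹) * ((1 - w * a) * (1 - w * b)) by ring,
      show w⁻¹ * (1 - w * 1) * (w⁻¹ * (1 - w * (a * b))) = (w⁻¹ * w⁻¹) * ((1 - w * 1) * (1 - w * (a * b))) by ring,
      mul_div_mul_left _ _ (mul_ne_zero (inv_ne_zero hw) (inv_ne_zero hw)), mul_one]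

/-- Regular case of `ζ`. -/
lemma RZ_zeta (a b : K) {w : RatFunc K} {w₀ : K} (hw : RZ w w₀)
    (hden : (1 - w₀) * (1 - w₀ * (a * b)) ≠ 0) :
    RZ (zetaF (RatFunc.C a) (RatFunc.C b) w) (zetaF a b w₀) := by
  rw [zetaF, zetaF]
  exact ((RZ_one.sub (hw.mul (RZ_C a))).mul (RZ_one.sub (hw.mul (RZ_C b)))).div
    ((RZ_one.sub hw).mul (RZ_one.sub (hw.mul ((RZ_C a).mul (RZ_C b))))) hden

lemma Regs_zeta (a b : K) {w : RatFunc K} {w₀ : K} (hw : RZ w w₀)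
    (hnum : (1 - w₀ * a) * (1 - w₀ * b) ≠ 0)
    (hden : (1 - w₀) * (1 - w₀ * (a * b)) ≠ 0) :
    Regs (zetaF (RatFunc.C a) (RatFunc.C b) w) :=
  ⟨zetaF a b w₀, div_ne_zero hnum hden, RZ_zeta a b hw hden⟩

/-- The case `w → ∞`: if `w⁻¹` is regular at `0` with value `0`, then `ζ(w)` is regular
with value `1`. -/
lemma Regs_zeta_inf {a b : K} (ha : a ≠ 0) (hb : b ≠ 0) {w : RatFunc K} (hw : w ≠ 0)
    (hwi : RZ w⁻¹ 0) : Regs (zetaF (RatFunc.C a) (RatFunc.C b) w) := by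
  rw [zeta_flip _ _ _ hw]
  have hab : a * b ≠ 0 := mul_ne_zero ha hb
  refine ⟨((0 - a) * (0 - b)) / ((0 - 1) * (0 - a * b)), ?_, ?_⟩
  · apply div_ne_zero <;> simp [ha, hb, hab]
  · refine ((hwi.sub (RZ_C a)).mul (hwi.sub (RZ_C b))).div
      ((hwi.sub RZ_one).mul (hwi.sub ((RZ_C a).mul (RZ_C b)))) ?_
    simp [hab]

end Zeta

section Helpers

variable {K : Type*} [Field K]

lemma RatFuncC_ne_zero {c : K} (hc : c ≠ 0) : (RatFunc.C c : RatFunc K) ≠ 0 := by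
  intro h
  apply hc
  have h2 : algebraMap (Polynomial K) (RatFunc K) (Polynomial.C c) = 0 := by
    rw [RatFunc.algebraMap_C]; exact h
  have h3 := (map_eq_zero_iff _ (RatFunc.algebraMap_injective K)).mp h2
  exact Polynomial.C_eq_zero.mp h3

lemma Regs_C {v : K} (hv : v ≠ 0) : Regs (RatFunc.C v) := ⟨v, hv, RZ_C v⟩

lemma one_sub_div_X_inv (b : RatFunc K) :
    (1 - b / RatFunc.X)⁻¹ = RatFunc.X * (RatFunc.X - b)⁻¹ := by
  rw [show (1 : RatFunc K) - b / RatFunc.X = (RatFunc.X - b) / RatFunc.X by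
        rw [sub_div, div_self RatFunc.X_ne_zero],
      inv_div, div_eq_mul_inv]

lemma div_one_sub_div {L : Type*} [Field L] (w d e : L) (hw : w ≠ 0) :
    (1 - d / w) / (1 - e / w) = (w - d) / (w - e) := by
  have h : ∀ c : L, 1 - c / w = (w - c) / w := fun c => by rw [sub_div, div_self hw]
  rw [h, h, div_div_div_comm, div_self hw, div_one]

lemma zetaF_C (a b w : K) :
    zetaF (RatFunc.C a) (RatFunc.C b) (RatFunc.C w) = RatFunc.C (zetaF a b w) := by
  simp only [zetaF, map_div₀, map_mul, map_sub, map_one]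

lemma assemble (P fiv Ar B Cp R : RatFunc K)
    (hfiv : fiv⁻¹ = RatFunc.X * R) (hR : Regs R) (hP : Regs P) (hAr : Regs Ar)
    (hB : Regs B) (hCp : Reg Cp) :
    ∃ g : RatFunc K, Reg g ∧ P * (fiv * Ar * B)⁻¹ * Cp = RatFunc.X * g := by
  refine ⟨P * (R * Ar⁻¹ * B⁻¹) * Cp,
    ((hP.mul ((hR.mul hAr.inv).mul hB.inv)).reg).mul hCp, ?_⟩
  rw [mul_inv, mul_inv, hfiv]
  ring

end Helpers

section GenNe

variable {F K : Type*} [Field F] [Field K] {σ : Type*} (ιK : F →+* K) (Z : σ → K)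

lemma gen_ne1 (hgen1 : ∀ s t : σ, s ≠ t → ∀ c : F, Z s ≠ ιK c * Z t)
    (hZ0 : ∀ s, Z s ≠ 0) (s t : σ) (hst : s ≠ t) (c : F) :
    1 - ιK c * Z t / Z s ≠ 0 := by
  intro h
  exact hgen1 s t hst c ((div_eq_one_iff_eq (hZ0 s)).mp (sub_eq_zero.mp h).symm).symm

lemma gen_ne2 (hgen1 : ∀ s t : σ, s ≠ t → ∀ c : F, Z s ≠ ιK c * Z t)
    (hZ0 : ∀ s, Z s ≠ 0) (s t : σ) (hst : s ≠ t) (c : F) :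
    1 - Z t / Z s * ιK c ≠ 0 := by
  intro h
  apply gen_ne1 ιK Z hgen1 hZ0 s t hst c
  rw [← h]; ring

lemma gen_ne0 (hgen1 : ∀ s t : σ, s ≠ t → ∀ c : F, Z s ≠ ιK c * Z t)
    (hZ0 : ∀ s, Z s ≠ 0) (s t : σ) (hst : s ≠ t) :
    1 - Z t / Z s ≠ 0 := by
  have h := gen_ne2 ιK Z hgen1 hZ0 s t hst 1
  simpa using h

end GenNe

section MasterI

variable {F K : Type*} [Field F] [Field K]

lemma master_i (ιK : F →+* K) (q₁ q₂ m : F) (r : ℕ) (x x' : Fin r → F)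
    (hq₁ : q₁ ≠ 0) (hq₂ : q₂ ≠ 0) (hm : m ≠ 0) (hx : ∀ a, x a ≠ 0)
    (n iv : ℕ) (hiv : iv < n - 1)
    (Z : {j : ℕ // j < n ∧ j ≠ iv} → K)
    (hgen1 : ∀ s t, s ≠ t → ∀ c : F, Z s ≠ ιK c * Z t)
    (hgen2 : ∀ s (c : F), Z s ≠ ιK c)
    (z : ℕ → RatFunc K)
    (hzc : ∀ j (h : j < n ∧ j ≠ iv), z j = RatFunc.C (Z ⟨j, h⟩))
    (hziv : z iv = RatFunc.X) :
    ∃ g : RatFunc K, Reg g ∧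
      Jfun ((RatFunc.C).comp ιK) q₁ q₂ m r x x' n z = RatFunc.X * g := by
  have hZ0 : ∀ s, Z s ≠ 0 := fun s => by simpa using hgen2 s 0
  have hK1 : ιK q₁ ≠ 0 := fun h => hq₁ (ιK.injective (by rw [h, map_zero]))
  have hK2 : ιK q₂ ≠ 0 := fun h => hq₂ (ιK.injective (by rw [h, map_zero]))
  have hKm : ιK m ≠ 0 := fun h => hm (ιK.injective (by rw [h, map_zero]))
  have hKx : ∀ a, ιK (x a) ≠ 0 := fun a h => hx a (ιK.injective (by rw [h, map_zero]))
  have hmem : iv ∈ Finset.range (n - 1) := Finset.mem_range.mpr hiv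
  have hiv1 : iv + 1 < n ∧ iv + 1 ≠ iv := ⟨by omega, by omega⟩
  rw [Jfun]
  simp only [RingHom.comp_apply]
  rw [← Finset.mul_prod_erase (Finset.range (n - 1))
      (fun i => 1 - RatFunc.C (ιK q₁) * RatFunc.C (ιK q₂) * z (i + 1) / z i) hmem]
  refine assemble _ _ _ _ _
    ((RatFunc.X - RatFunc.C (ιK q₁ * ιK q₂ * Z ⟨iv + 1, hiv1⟩))⁻¹) ?_ ?_ ?_ ?_ ?_ ?_
  · -- special factor
    show (1 - RatFunc.C (ιK q₁) * RatFunc.C (ιK q₂) * z (iv + 1) / z iv)⁻¹ = _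
    rw [hzc (iv + 1) hiv1, hziv, map_mul, map_mul]
    exact one_sub_div_X_inv _
  · -- Regs R
    exact Regs.inv ⟨0 - ιK q₁ * ιK q₂ * Z ⟨iv + 1, hiv1⟩,
      by simp [hK1, hK2, hZ0 ⟨iv + 1, hiv1⟩], RZ_X.sub (RZ_C _)⟩
  · -- Regs P
    rw [← map_mul, ← map_pow]
    exact Regs_C (pow_ne_zero _ (mul_ne_zero hK1 hK2))
  · -- Regs Arest
    apply Regs_prod
    intro i hi
    rw [Finset.mem_erase, Finset.mem_range] at hi
    obtain ⟨hine, hilt⟩ := hi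
    have hin : i < n ∧ i ≠ iv := ⟨by omega, hine⟩
    show Regs (1 - RatFunc.C (ιK q₁) * RatFunc.C (ιK q₂) * z (i + 1) / z i)
    rw [hzc i hin]
    by_cases h1 : i + 1 = iv
    · rw [h1, hziv]
      exact ⟨1 - ιK q₁ * ιK q₂ * 0 / Z ⟨i, hin⟩, by simp,
        RZ_one.sub ((((RZ_C _).mul (RZ_C _)).mul RZ_X).div (RZ_C _) (hZ0 _))⟩
    · have hin1 : i + 1 < n ∧ i + 1 ≠ iv := ⟨by omega, h1⟩
      rw [hzc (i + 1) hin1]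
      have hst : (⟨i, hin⟩ : {j : ℕ // j < n ∧ j ≠ iv}) ≠ ⟨i + 1, hin1⟩ := by
        intro hh
        have := congrArg Subtype.val hh
        simp only at this
        omega
      have hconst : (1 : RatFunc K) - RatFunc.C (ιK q₁) * RatFunc.C (ιK q₂) *
            RatFunc.C (Z ⟨i + 1, hin1⟩) / RatFunc.C (Z ⟨i, hin⟩)
          = RatFunc.C (1 - ιK q₁ * ιK q₂ * Z ⟨i + 1, hin1⟩ / Z ⟨i, hin⟩) := by
        simp only [map_sub, map_div₀, map_mul, map_one]
      rw [hconst]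
      apply Regs_C
      have h2 := gen_ne1 ιK Z hgen1 hZ0 ⟨i, hin⟩ ⟨i + 1, hin1⟩ hst (q₁ * q₂)
      rw [map_mul] at h2
      exact h2
  · -- Regs B
    apply Regs_prod
    intro i hi
    rw [Finset.mem_range] at hi
    apply Regs_prod
    intro j hj
    rw [Finset.mem_Ico] at hj
    show Regs (zetaF (RatFunc.C (ιK q₁)) (RatFunc.C (ιK q₂)) (z j / z i))
    by_cases hii : i = iv
    · have hjn : j < n ∧ j ≠ iv := ⟨hj.2, by omega⟩
      rw [hii, hziv, hzc j hjn]
      refine Regs_zeta_inf hK1 hK2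
        (div_ne_zero (RatFuncC_ne_zero (hZ0 _)) RatFunc.X_ne_zero) ?_
      exact (RZ_X.div (RZ_C (Z ⟨j, hjn⟩)) (hZ0 _)).congr (inv_div _ _).symm (zero_div _)
    · by_cases hjj : j = iv
      · have hin : i < n ∧ i ≠ iv := ⟨hi, hii⟩
        rw [hjj, hziv, hzc i hin]
        refine Regs_zeta _ _ ((RZ_X.div (RZ_C (Z ⟨i, hin⟩)) (hZ0 _)).congr rfl (zero_div _))
          ?_ ?_ <;> simp
      · have hjn : j < n ∧ j ≠ iv := ⟨hj.2, hjj⟩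
        have hin : i < n ∧ i ≠ iv := ⟨hi, hii⟩
        have hst : (⟨i, hin⟩ : {j : ℕ // j < n ∧ j ≠ iv}) ≠ ⟨j, hjn⟩ := by
          intro hh
          have := congrArg Subtype.val hh
          simp only at this
          omega
        rw [hzc j hjn, hzc i hin, ← map_div₀ (RatFunc.C), zetaF_C]
        apply Regs_C
        unfold zetaF
        apply div_ne_zero
        · exact mul_ne_zero (gen_ne2 ιK Z hgen1 hZ0 _ _ hst q₁)
            (gen_ne2 ιK Z hgen1 hZ0 _ _ hst q₂)
        · refine mul_ne_zero (gen_ne0 ιK Z hgen1 hZ0 _ _ hst) ?_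
          have h2 := gen_ne2 ιK Z hgen1 hZ0 _ _ hst (q₁ * q₂)
          rw [map_mul] at h2
          exact h2
  · -- Reg Cp
    apply Reg_prod
    intro i hi
    rw [Finset.mem_range] at hi
    show Reg ((∏ a : Fin r, (1 - RatFunc.C (ιK (x' a)) /
        (z i * (RatFunc.C (ιK q₁) * RatFunc.C (ιK q₂))))) /
      ∏ a : Fin r, (1 - RatFunc.C (ιK m) * RatFunc.C (ιK (x a)) /
        (z i * (RatFunc.C (ιK q₁) * RatFunc.C (ιK q₂)))))
    rw [← Finset.prod_div_distrib]
    apply Reg_prod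
    intro a _
    by_cases hii : i = iv
    · rw [hii, hziv]
      rw [div_one_sub_div _ _ _ (mul_ne_zero RatFunc.X_ne_zero
        (mul_ne_zero (RatFuncC_ne_zero hK1) (RatFuncC_ne_zero hK2)))]
      refine ⟨_, ((RZ_X.mul ((RZ_C _).mul (RZ_C _))).sub (RZ_C (ιK (x' a)))).div
        ((RZ_X.mul ((RZ_C _).mul (RZ_C _))).sub ((RZ_C (ιK m)).mul (RZ_C (ιK (x a))))) ?_⟩
      simpa using mul_ne_zero hKm (hKx a)
    · have hin : i < n ∧ i ≠ iv := ⟨hi, hii⟩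
      rw [hzc i hin]
      have hconst : (1 - RatFunc.C (ιK (x' a)) /
            (RatFunc.C (Z ⟨i, hin⟩) * (RatFunc.C (ιK q₁) * RatFunc.C (ιK q₂)))) /
          (1 - RatFunc.C (ιK m) * RatFunc.C (ιK (x a)) /
            (RatFunc.C (Z ⟨i, hin⟩) * (RatFunc.C (ιK q₁) * RatFunc.C (ιK q₂))))
          = RatFunc.C ((1 - ιK (x' a) / (Z ⟨i, hin⟩ * (ιK q₁ * ιK q₂))) /
            (1 - ιK m * ιK (x a) / (Z ⟨i, hin⟩ * (ιK q₁ * ιK q₂)))) := by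
        simp only [map_sub, map_div₀, map_mul, map_one]
      rw [hconst]
      exact ⟨_, RZ_C _⟩

end MasterI

section MasterII

variable {F K : Type*} [Field F] [Field K]

lemma master_ii (ιK : F →+* K) (q₁ q₂ m : F) (r : ℕ) (x x' : Fin r → F)
    (hq₁ : q₁ ≠ 0) (hq₂ : q₂ ≠ 0) (hm : m ≠ 0) (hx : ∀ a, x a ≠ 0)
    (n iv : ℕ) (hiv0 : 1 ≤ iv) (hiv : iv < n)
    (Z : {j : ℕ // j < n ∧ j ≠ iv} → K)
    (hgen1 : ∀ s t, s ≠ t → ∀ c : F, Z s ≠ ιK c * Z t)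
    (hgen2 : ∀ s (c : F), Z s ≠ ιK c)
    (z : ℕ → RatFunc K)
    (hzc : ∀ j (h : j < n ∧ j ≠ iv), z j = RatFunc.C (Z ⟨j, h⟩))
    (hziv : z iv = (RatFunc.X)⁻¹) :
    ∃ g : RatFunc K, Reg g ∧
      Jfun ((RatFunc.C).comp ιK) q₁ q₂ m r x x' n z = RatFunc.X * g := by
  have hZ0 : ∀ s, Z s ≠ 0 := fun s => by simpa using hgen2 s 0
  have hK1 : ιK q₁ ≠ 0 := fun h => hq₁ (ιK.injective (by rw [h, map_zero]))
  have hK2 : ιK q₂ ≠ 0 := fun h => hq₂ (ιK.injective (by rw [h, map_zero]))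
  have hKm : ιK m ≠ 0 := fun h => hm (ιK.injective (by rw [h, map_zero]))
  have hKx : ∀ a, ιK (x a) ≠ 0 := fun a h => hx a (ιK.injective (by rw [h, map_zero]))
  have hmem : iv - 1 ∈ Finset.range (n - 1) := Finset.mem_range.mpr (by omega)
  have hivm : iv - 1 < n ∧ iv - 1 ≠ iv := ⟨by omega, by omega⟩
  rw [Jfun]
  simp only [RingHom.comp_apply]
  rw [← Finset.mul_prod_erase (Finset.range (n - 1))
      (fun i => 1 - RatFunc.C (ιK q₁) * RatFunc.C (ιK q₂) * z (i + 1) / z i) hmem]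
  refine assemble _ _ _ _ _
    ((RatFunc.X - RatFunc.C (ιK q₁ * ιK q₂ / Z ⟨iv - 1, hivm⟩))⁻¹) ?_ ?_ ?_ ?_ ?_ ?_
  · -- special factor
    show (1 - RatFunc.C (ιK q₁) * RatFunc.C (ιK q₂) * z (iv - 1 + 1) / z (iv - 1))⁻¹ = _
    have e1 : iv - 1 + 1 = iv := by omega
    rw [e1, hziv, hzc (iv - 1) hivm]
    have e2 : RatFunc.C (ιK q₁) * RatFunc.C (ιK q₂) * (RatFunc.X)⁻¹ /
          RatFunc.C (Z ⟨iv - 1, hivm⟩)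
        = RatFunc.C (ιK q₁ * ιK q₂ / Z ⟨iv - 1, hivm⟩) / RatFunc.X := by
      rw [map_div₀, map_mul]
      ring
    rw [e2]
    exact one_sub_div_X_inv _
  · -- Regs R
    refine Regs.inv ⟨0 - ιK q₁ * ιK q₂ / Z ⟨iv - 1, hivm⟩, ?_, RZ_X.sub (RZ_C _)⟩
    simp [div_eq_zero_iff, hK1, hK2, hZ0 ⟨iv - 1, hivm⟩]
  · -- Regs P
    rw [← map_mul, ← map_pow]
    exact Regs_C (pow_ne_zero _ (mul_ne_zero hK1 hK2))
  · -- Regs Arest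
    apply Regs_prod
    intro i hi
    rw [Finset.mem_erase, Finset.mem_range] at hi
    obtain ⟨hine, hilt⟩ := hi
    show Regs (1 - RatFunc.C (ιK q₁) * RatFunc.C (ιK q₂) * z (i + 1) / z i)
    by_cases hii : i = iv
    · have hin1 : i + 1 < n ∧ i + 1 ≠ iv := ⟨by omega, by omega⟩
      rw [hzc (i + 1) hin1, show z i = (RatFunc.X)⁻¹ from by rw [hii, hziv]]
      have e : RatFunc.C (ιK q₁) * RatFunc.C (ιK q₂) * RatFunc.C (Z ⟨i + 1, hin1⟩) /
            (RatFunc.X)⁻¹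
          = RatFunc.C (ιK q₁) * RatFunc.C (ιK q₂) * RatFunc.C (Z ⟨i + 1, hin1⟩) *
            RatFunc.X := by
        rw [div_eq_mul_inv, inv_inv]
      rw [e]
      exact ⟨1 - ιK q₁ * ιK q₂ * Z ⟨i + 1, hin1⟩ * 0, by simp,
        RZ_one.sub ((((RZ_C _).mul (RZ_C _)).mul (RZ_C _)).mul RZ_X)⟩
    · have hin : i < n ∧ i ≠ iv := ⟨by omega, hii⟩
      have hin1 : i + 1 < n ∧ i + 1 ≠ iv := ⟨by omega, by omega⟩
      rw [hzc i hin, hzc (i + 1) hin1]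
      have hst : (⟨i, hin⟩ : {j : ℕ // j < n ∧ j ≠ iv}) ≠ ⟨i + 1, hin1⟩ := by
        intro hh
        have := congrArg Subtype.val hh
        simp only at this
        omega
      have hconst : (1 : RatFunc K) - RatFunc.C (ιK q₁) * RatFunc.C (ιK q₂) *
            RatFunc.C (Z ⟨i + 1, hin1⟩) / RatFunc.C (Z ⟨i, hin⟩)
          = RatFunc.C (1 - ιK q₁ * ιK q₂ * Z ⟨i + 1, hin1⟩ / Z ⟨i, hin⟩) := by
        simp only [map_sub, map_div₀, map_mul, map_one]
      rw [hconst]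
      apply Regs_C
      have h2 := gen_ne1 ιK Z hgen1 hZ0 ⟨i, hin⟩ ⟨i + 1, hin1⟩ hst (q₁ * q₂)
      rw [map_mul] at h2
      exact h2
  · -- Regs B
    apply Regs_prod
    intro i hi
    rw [Finset.mem_range] at hi
    apply Regs_prod
    intro j hj
    rw [Finset.mem_Ico] at hj
    show Regs (zetaF (RatFunc.C (ιK q₁)) (RatFunc.C (ιK q₂)) (z j / z i))
    by_cases hii : i = iv
    · have hjn : j < n ∧ j ≠ iv := ⟨hj.2, by omega⟩
      rw [hii, hziv, hzc j hjn]
      have e : RatFunc.C (Z ⟨j, hjn⟩) / (RatFunc.X)⁻¹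
          = RatFunc.C (Z ⟨j, hjn⟩) * RatFunc.X := by
        rw [div_eq_mul_inv, inv_inv]
      rw [e]
      refine Regs_zeta _ _ ((RZ_C (Z ⟨j, hjn⟩)).mul RZ_X) ?_ ?_ <;> simp
    · by_cases hjj : j = iv
      · have hin : i < n ∧ i ≠ iv := ⟨hi, hii⟩
        rw [hjj, hziv, hzc i hin]
        refine Regs_zeta_inf hK1 hK2
          (div_ne_zero (inv_ne_zero RatFunc.X_ne_zero) (RatFuncC_ne_zero (hZ0 _))) ?_
        refine ((RZ_C (Z ⟨i, hin⟩)).mul RZ_X).congr ?_ (mul_zero _)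
        rw [inv_div, div_eq_mul_inv, inv_inv]
      · have hjn : j < n ∧ j ≠ iv := ⟨hj.2, hjj⟩
        have hin : i < n ∧ i ≠ iv := ⟨hi, hii⟩
        have hst : (⟨i, hin⟩ : {j : ℕ // j < n ∧ j ≠ iv}) ≠ ⟨j, hjn⟩ := by
          intro hh
          have := congrArg Subtype.val hh
          simp only at this
          omega
        rw [hzc j hjn, hzc i hin, ← map_div₀ (RatFunc.C), zetaF_C]
        apply Regs_C
        unfold zetaF
        apply div_ne_zero
        · exact mul_ne_zero (gen_ne2 ιK Z hgen1 hZ0 _ _ hst q₁)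
            (gen_ne2 ιK Z hgen1 hZ0 _ _ hst q₂)
        · refine mul_ne_zero (gen_ne0 ιK Z hgen1 hZ0 _ _ hst) ?_
          have h2 := gen_ne2 ιK Z hgen1 hZ0 _ _ hst (q₁ * q₂)
          rw [map_mul] at h2
          exact h2
  · -- Reg Cp
    apply Reg_prod
    intro i hi
    rw [Finset.mem_range] at hi
    show Reg ((∏ a : Fin r, (1 - RatFunc.C (ιK (x' a)) /
        (z i * (RatFunc.C (ιK q₁) * RatFunc.C (ιK q₂))))) /
      ∏ a : Fin r, (1 - RatFunc.C (ιK m) * RatFunc.C (ιK (x a)) /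
        (z i * (RatFunc.C (ιK q₁) * RatFunc.C (ιK q₂)))))
    rw [← Finset.prod_div_distrib]
    apply Reg_prod
    intro a _
    by_cases hii : i = iv
    · rw [hii, hziv]
      have e : ∀ v : RatFunc K,
          v / ((RatFunc.X)⁻¹ * (RatFunc.C (ιK q₁) * RatFunc.C (ιK q₂)))
          = v / (RatFunc.C (ιK q₁) * RatFunc.C (ιK q₂)) * RatFunc.X := by
        intro v
        rw [div_eq_mul_inv, mul_inv, inv_inv, div_eq_mul_inv]
        ring
      rw [e, e]
      refine ⟨_, (RZ_one.sub (((RZ_C (ιK (x' a))).div ((RZ_C _).mul (RZ_C _))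
          (mul_ne_zero hK1 hK2)).mul RZ_X)).div
        (RZ_one.sub ((((RZ_C (ιK m)).mul (RZ_C (ιK (x a)))).div ((RZ_C _).mul (RZ_C _))
          (mul_ne_zero hK1 hK2)).mul RZ_X)) ?_⟩
      simp
    · have hin : i < n ∧ i ≠ iv := ⟨hi, hii⟩
      rw [hzc i hin]
      have hconst : (1 - RatFunc.C (ιK (x' a)) /
            (RatFunc.C (Z ⟨i, hin⟩) * (RatFunc.C (ιK q₁) * RatFunc.C (ιK q₂)))) /
          (1 - RatFunc.C (ιK m) * RatFunc.C (ιK (x a)) /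
            (RatFunc.C (Z ⟨i, hin⟩) * (RatFunc.C (ιK q₁) * RatFunc.C (ιK q₂))))
          = RatFunc.C ((1 - ιK (x' a) / (Z ⟨i, hin⟩ * (ιK q₁ * ιK q₂))) /
            (1 - ιK m * ιK (x a) / (Z ⟨i, hin⟩ * (ιK q₁ * ιK q₂)))) := by
        simp only [map_sub, map_div₀, map_mul, map_one]
      rw [hconst]
      exact ⟨_, RZ_C _⟩

end MasterII

section Concrete

variable {F : Type} [Field F]

lemma gen_concrete1 {σ : Type} [DecidableEq σ] (s t : σ) (hst : s ≠ t) (c : F) :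
    algebraMap (MvPolynomial σ F) (FractionRing (MvPolynomial σ F)) (MvPolynomial.X s)
      ≠ ((algebraMap (MvPolynomial σ F) (FractionRing (MvPolynomial σ F))).comp
          MvPolynomial.C) c
        * algebraMap (MvPolynomial σ F) (FractionRing (MvPolynomial σ F))
            (MvPolynomial.X t) := by
  intro h
  simp only [RingHom.comp_apply] at h
  have h2 : (MvPolynomial.X s : MvPolynomial σ F) = MvPolynomial.C c * MvPolynomial.X t := by
    apply IsFractionRing.injective (MvPolynomial σ F) (FractionRing (MvPolynomial σ F))
    rw [map_mul]
    exact h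
  have h3 := congrArg (MvPolynomial.coeff (Finsupp.single s 1)) h2
  have hne : (Finsupp.single t 1 : σ →₀ ℕ) ≠ Finsupp.single s 1 :=
    fun hh => hst ((Finsupp.single_left_injective one_ne_zero) hh).symm
  rw [MvPolynomial.coeff_C_mul, MvPolynomial.coeff_X', MvPolynomial.coeff_X',
    if_pos rfl, if_neg hne] at h3
  simp at h3

lemma gen_concrete2 {σ : Type} [DecidableEq σ] (s : σ) (c : F) :
    algebraMap (MvPolynomial σ F) (FractionRing (MvPolynomial σ F)) (MvPolynomial.X s)
      ≠ ((algebraMap (MvPolynomial σ F) (FractionRing (MvPolynomial σ F))).comp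
          MvPolynomial.C) c := by
  intro h
  simp only [RingHom.comp_apply] at h
  have h2 : (MvPolynomial.X s : MvPolynomial σ F) = MvPolynomial.C c :=
    IsFractionRing.injective (MvPolynomial σ F) (FractionRing (MvPolynomial σ F)) h
  have h3 := congrArg (MvPolynomial.coeff (Finsupp.single s 1)) h2
  have hne : (0 : σ →₀ ℕ) ≠ Finsupp.single s 1 :=
    fun hh => one_ne_zero (by simpa using hh.symm : (1 : ℕ) = 0)
  rw [MvPolynomial.coeff_X', MvPolynomial.coeff_C, if_pos rfl, if_neg hne] at h3
  simp at h3

end Concrete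


/-- For `n ≥ 2`:
(i) for each `1 ≤ i ≤ n - 1` (here `i` is the 0-based index `iv`, with `iv < n - 1`,
corresponding to the paper's variable `z_{iv+1}`), the function `J_n`, regarded as a
rational function in the single variable `z_{iv+1}` over the field generated by the
remaining variables, has no pole at `z_{iv+1} = 0` and its value there is `0`;
(ii) for each `2 ≤ i ≤ n` (0-based: `1 ≤ iv < n`), the rational function in `w` obtained
from `J_n` by substituting `z_{iv+1} = w⁻¹` has no pole at `w = 0` and its value there
is `0`. -/
theorem stmt_6 {F : Type} [Field F] (r : ℕ) (hr : 1 ≤ r) (q₁ q₂ m : F)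
    (x x' : Fin r → F) (hq₁ : q₁ ≠ 0) (hq₂ : q₂ ≠ 0) (hm : m ≠ 0)
    (hx : ∀ a, x a ≠ 0) (hx' : ∀ a, x' a ≠ 0) (n : ℕ) (hn : 2 ≤ n) :
    (∀ iv : ℕ, iv < n - 1 →
      let K := FractionRing (MvPolynomial {j : ℕ // j < n ∧ j ≠ iv} F)
      let Z : {j : ℕ // j < n ∧ j ≠ iv} → K := fun s =>
        algebraMap (MvPolynomial {j : ℕ // j < n ∧ j ≠ iv} F) K (MvPolynomial.X s)
      let ιK : F →+* K :=
        (algebraMap (MvPolynomial {j : ℕ // j < n ∧ j ≠ iv} F) K).comp MvPolynomial.C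
      let Jn : RatFunc K := Jfun ((RatFunc.C).comp ιK) q₁ q₂ m r x x' n
        (fun j => if h : j < n ∧ j ≠ iv then RatFunc.C (Z ⟨j, h⟩) else RatFunc.X)
      Polynomial.eval 0 (RatFunc.denom Jn) ≠ 0 ∧
        Polynomial.eval 0 (RatFunc.num Jn) / Polynomial.eval 0 (RatFunc.denom Jn) = 0) ∧
    (∀ iv : ℕ, 1 ≤ iv → iv < n →
      let K := FractionRing (MvPolynomial {j : ℕ // j < n ∧ j ≠ iv} F)
      let Z : {j : ℕ // j < n ∧ j ≠ iv} → K := fun s =>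
        algebraMap (MvPolynomial {j : ℕ // j < n ∧ j ≠ iv} F) K (MvPolynomial.X s)
      let ιK : F →+* K :=
        (algebraMap (MvPolynomial {j : ℕ // j < n ∧ j ≠ iv} F) K).comp MvPolynomial.C
      let Jn : RatFunc K := Jfun ((RatFunc.C).comp ιK) q₁ q₂ m r x x' n
        (fun j => if h : j < n ∧ j ≠ iv then RatFunc.C (Z ⟨j, h⟩) else RatFunc.X⁻¹)
      Polynomial.eval 0 (RatFunc.denom Jn) ≠ 0 ∧
        Polynomial.eval 0 (RatFunc.num Jn) / Polynomial.eval 0 (RatFunc.denom Jn) = 0) := by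
  constructor
  · intro iv hiv
    intro K Z ιK Jn
    have hgen1 : ∀ s t, s ≠ t → ∀ c : F, Z s ≠ ιK c * Z t :=
      fun s t hst c => gen_concrete1 s t hst c
    have hgen2 : ∀ s (c : F), Z s ≠ ιK c := fun s c => gen_concrete2 s c
    obtain ⟨g, hg, he⟩ := master_i ιK q₁ q₂ m r x x' hq₁ hq₂ hm hx n iv hiv Z hgen1 hgen2
      (fun j => if h : j < n ∧ j ≠ iv then RatFunc.C (Z ⟨j, h⟩) else RatFunc.X)
      (fun j h => dif_pos h) (dif_neg (by simp))
    exact conclude hg he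
  · intro iv hiv0 hiv
    intro K Z ιK Jn
    have hgen1 : ∀ s t, s ≠ t → ∀ c : F, Z s ≠ ιK c * Z t :=
      fun s t hst c => gen_concrete1 s t hst c
    have hgen2 : ∀ s (c : F), Z s ≠ ιK c := fun s c => gen_concrete2 s c
    obtain ⟨g, hg, he⟩ := master_ii ιK q₁ q₂ m r x x' hq₁ hq₂ hm hx n iv hiv0 hiv Z hgen1 hgen2
      (fun j => if h : j < n ∧ j ≠ iv then RatFunc.C (Z ⟨j, h⟩) else RatFunc.X⁻¹)
      (fun j h => dif_pos h) (dif_neg (by simp))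
    exact conclude hg he
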